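/- Let σ ∈ (-5/2, -1/2) and κ = (2σ+1)/(2σ) ∈ (0, 4/5). For real Ω ≥ 1, Z ≥ 1 with Z ≤ Ω and Z ≤ Ω^κ, define M_σ(Ω,Z)^2 = Σ_{k≥1} (k^2+Z^2)^{-σ}/(k^2(k^4+Ω^4)). Then there exist constants C1, C2 > 0 depending only on σ such that C1 · Ω^{-2σ-5} ≤ M_σ(Ω,Z)^2 ≤ C2 · Ω^{-2σ-5}. -/

import Mathlib

open Real Finset

lemma aux_bern_neg {t p : ℝ} (ht : -1 < t) (ht' : t ≤ 0) (hp : p ≤ 0) :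
    1 + p * t ≤ (1 + t) ^ p := by
  have hy : (0:ℝ) < 1 + t := by linarith
  have hpt : 0 ≤ p * t := by nlinarith
  rcases le_total (-p) 1 with hp1 | hp1
  · have hb : (1 + t) ^ (-p) ≤ 1 + (-p) * t :=
      rpow_one_add_le_one_add_mul_self ht.le (by linarith) hp1
    have h1 : (0:ℝ) < 1 + (-p) * t := lt_of_lt_of_le (rpow_pos_of_pos hy _) hb
    have h2 : (1 + (-p) * t)⁻¹ ≤ ((1 + t) ^ (-p))⁻¹ :=
      inv_anti₀ (rpow_pos_of_pos hy _) hb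
    have key : (1 + p * t) * (1 + (-p) * t) ≤ 1 := by nlinarith [sq_nonneg (p * t)]
    have h3 : 1 + p * t ≤ (1 + (-p) * t)⁻¹ := by
      rw [← mul_le_mul_iff_left₀ h1, inv_mul_cancel₀ h1.ne']; exact key
    calc 1 + p * t ≤ ((1 + t) ^ (-p))⁻¹ := h3.trans h2
      _ = (1 + t) ^ p := by rw [← rpow_neg hy.le, neg_neg]
  · have hb : 1 + (-p) * (-t / (1 + t)) ≤ (1 + (-t / (1 + t))) ^ (-p) :=
      one_add_mul_self_le_rpow_one_add (le_trans (by norm_num) (div_nonneg (neg_nonneg.2 ht') hy.le)) hp1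
    have he : 1 + (-t / (1 + t)) = (1 + t)⁻¹ := by field_simp; ring
    have hq : p * t ≤ p * t / (1 + t) := by
      rw [le_div_iff₀ hy]; nlinarith
    calc 1 + p * t ≤ 1 + p * t / (1 + t) := by linarith
      _ = 1 + (-p) * (-t / (1 + t)) := by ring
      _ ≤ (1 + (-t / (1 + t))) ^ (-p) := hb
      _ = (1 + t)⁻¹ ^ (-p) := by rw [he]
      _ = ((1 + t) ^ (-p))⁻¹ := by rw [inv_rpow hy.le]
      _ = (1 + t) ^ p := by rw [← rpow_neg hy.le, neg_neg]

lemma aux_P1 {ε x : ℝ} (hx : 1 ≤ x) (hε0 : 0 < ε) (hε1 : ε ≤ 1) :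
    ε * x ^ (ε-1) ≤ x ^ ε - (x-1) ^ ε := by
  have hx0 : (0:ℝ) < x := by linarith
  have hinv : 1/x ≤ 1 := by rw [div_le_one hx0]; exact hx
  have hb : (1 + (-1/x)) ^ ε ≤ 1 + ε * (-1/x) :=
    rpow_one_add_le_one_add_mul_self (by rw [neg_div]; linarith) hε0.le hε1
  have h1 : (x-1:ℝ) ^ ε ≤ x ^ ε * (1 + ε * (-1/x)) := by
    have he : (x-1:ℝ) = x * (1 + (-1/x)) := by field_simp; ring
    rw [he, mul_rpow hx0.le (by rw [neg_div]; linarith)]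
    exact mul_le_mul_of_nonneg_left hb (rpow_nonneg hx0.le _)
  have h2 : x ^ ε * (1 + ε * (-1/x)) = x ^ ε - ε * x ^ (ε-1) := by
    rw [rpow_sub hx0, rpow_one]; field_simp; ring
  rw [h2] at h1; linarith

lemma aux_P2 {q x : ℝ} (hx : 2 ≤ x) (hq : q < -1) :
    (-(q+1)) * x ^ q ≤ (x-1) ^ (q+1) - x ^ (q+1) := by
  have hx0 : (0:ℝ) < x := by linarith
  have hinv : 1/x < 1 := by rw [div_lt_one hx0]; linarith
  have hb : 1 + (q+1) * (-1/x) ≤ (1 + (-1/x)) ^ (q+1) :=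
    aux_bern_neg (by rw [neg_div]; linarith) (by rw [neg_div]; exact neg_nonpos.2 (by positivity)) (by linarith)
  have h1 : x ^ (q+1) * (1 + (q+1) * (-1/x)) ≤ (x-1:ℝ) ^ (q+1) := by
    have he : (x-1:ℝ) = x * (1 + (-1/x)) := by field_simp; ring
    rw [he, mul_rpow hx0.le (by rw [neg_div]; linarith)]
    exact mul_le_mul_of_nonneg_left hb (rpow_nonneg hx0.le _)
  have h2 : x ^ (q+1) * (1 + (q+1) * (-1/x)) = x ^ (q+1) + (-(q+1)) * x ^ q := by
    rw [Real.rpow_add_one hx0.ne']; field_simp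
  rw [h2] at h1; linarith

lemma aux_sum_head {ε : ℝ} (hε0 : 0 < ε) (hε1 : ε ≤ 1) (M : ℕ) :
    ∑ k ∈ Finset.range M, ((k:ℝ)+1) ^ (ε-1) ≤ (M:ℝ) ^ ε / ε := by
  induction M with
  | zero => simp [Real.zero_rpow (ne_of_gt hε0)]
  | succ M ih =>
    rw [Finset.sum_range_succ]
    have hp1 := aux_P1 (x := (M:ℝ)+1) (by linarith [(Nat.cast_nonneg M : (0:ℝ) ≤ M)]) hε0 hε1
    rw [show ((M:ℝ)+1-1) = (M:ℝ) by ring] at hp1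
    rw [le_div_iff₀ hε0] at ih ⊢
    push_cast
    nlinarith

lemma aux_sum_tail {q : ℝ} (hq : q < -1) {N : ℕ} (hN : 1 ≤ N) :
    ∀ K, N ≤ K → ∑ k ∈ Finset.Ico N K, ((k:ℝ)+1) ^ q
      ≤ ((N:ℝ) ^ (q+1) - ((K:ℝ)) ^ (q+1)) / (-(q+1)) := by
  intro K hK
  induction K, hK using Nat.le_induction with
  | base => simp
  | succ K hK ih =>
    rw [Finset.sum_Ico_succ_top hK]
    have hK1 : (1:ℝ) ≤ (K:ℝ) := by exact_mod_cast Nat.one_le_cast.2 (hN.trans hK)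
    have hp2 := aux_P2 (x := (K:ℝ)+1) (by linarith) hq
    rw [show ((K:ℝ)+1-1) = (K:ℝ) by ring] at hp2
    have hq1 : (0:ℝ) < -(q+1) := by linarith
    rw [le_div_iff₀ hq1] at ih ⊢
    push_cast
    nlinarith

lemma aux_sum_sq (M : ℕ) :
    ∑ k ∈ Finset.range M, 1/((k:ℝ)+1)^2 ≤ 2 - 2/((M:ℝ)+1) := by
  induction M with
  | zero => norm_num
  | succ M ih =>
    rw [Finset.sum_range_succ]
    have h1 : (0:ℝ) < (M:ℝ)+1 := by positivity
    have h2 : (0:ℝ) < (M:ℝ)+2 := by positivity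
    have key : 1/((M:ℝ)+1)^2 ≤ 2/((M:ℝ)+1) - 2/((M:ℝ)+1+1) := by
      rw [show ((M:ℝ)+1+1) = (M:ℝ)+2 by ring, div_sub_div _ _ h1.ne' h2.ne',
        div_le_div_iff₀ (by positivity) (by positivity)]
      nlinarith
    push_cast
    linarith

set_option maxHeartbeats 1000000 in

theorem stmt_8 (σ : ℝ) (hσ : σ ∈ Set.Ioo (-(5:ℝ)/2) (-(1:ℝ)/2)) :
    ∃ C1 > 0, ∃ C2 > 0, ∀ Ω Z : ℝ, 1 ≤ Ω → 1 ≤ Z → Z ≤ Ω →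
      Z ≤ Ω ^ ((2*σ+1)/(2*σ)) →
      C1 * Ω ^ (-2*σ-5)
          ≤ (∑' k : ℕ, ((k+1:ℝ)^2 + Z^2) ^ (-σ) / ((k+1:ℝ)^2 * ((k+1:ℝ)^4 + Ω^4))) ∧
      (∑' k : ℕ, ((k+1:ℝ)^2 + Z^2) ^ (-σ) / ((k+1:ℝ)^2 * ((k+1:ℝ)^4 + Ω^4)))
          ≤ C2 * Ω ^ (-2*σ-5) := by
  obtain ⟨hσ1, hσ2⟩ := hσ
  set s : ℝ := -σ with hs_def
  have hs12 : (1:ℝ)/2 < s := by rw [hs_def]; linarith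
  have hs52 : s < 5/2 := by rw [hs_def]; linarith
  have hs0 : 0 < s := by linarith
  set ε : ℝ := min (1/2) (s - 1/2) with hε_def
  have hε0 : 0 < ε := lt_min (by norm_num) (by linarith)
  have hε1 : ε ≤ 1 := (min_le_left _ _).trans (by norm_num)
  have hεs : ε ≤ s - 1/2 := min_le_right _ _
  have h52 : 0 < 5 - 2*s := by linarith
  refine ⟨1/136, by norm_num, 6 * (1/ε + 32/(5-2*s) + 2), by positivity, ?_⟩
  intro Ω Z hΩ hZ hZΩ hZκ
  have hΩ0 : (0:ℝ) < Ω := by linarith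
  have hZ0 : (0:ℝ) < Z := by linarith
  rw [show (-2*σ-5:ℝ) = 2*s-5 from by rw [hs_def]; ring]
  -- square rpow helper
  have hsq : ∀ y : ℝ, 0 ≤ y → (y^2) ^ s = y ^ (2*s) := by
    intro y hy
    rw [← Real.rpow_natCast y 2, ← Real.rpow_mul hy]
    norm_num
  -- positivity of terms
  have hF0 : ∀ k : ℕ, 0 ≤ ((k+1:ℝ)^2 + Z^2) ^ s / ((k+1:ℝ)^2 * ((k+1:ℝ)^4 + Ω^4)) := by
    intro k; positivity
  -- 2^s ≤ 6
  have h2s6 : (2:ℝ) ^ s ≤ 6 := by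
    have h1 : (2:ℝ) ^ s ≤ 2 ^ ((5:ℝ)/2) :=
      rpow_le_rpow_of_exponent_le (by norm_num) (by linarith)
    have h2 : ((2:ℝ) ^ ((5:ℝ)/2))^2 = 32 := by
      rw [← Real.rpow_natCast ((2:ℝ) ^ ((5:ℝ)/2)) 2, ← Real.rpow_mul (by norm_num)]
      norm_num
    nlinarith [rpow_nonneg (by norm_num : (0:ℝ) ≤ 2) ((5:ℝ)/2)]
  -- Z ^ (2s) ≤ Ω ^ (2s - 1)
  have hZpow : Z ^ (2*s) ≤ Ω ^ (2*s-1) := by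
    have h2σ : (2*σ) ≠ 0 := by intro h; nlinarith
    have h1 : Z ^ (2*s) ≤ (Ω ^ ((2*σ+1)/(2*σ))) ^ (2*s) :=
      rpow_le_rpow hZ0.le hZκ (by linarith)
    have h2 : (Ω ^ ((2*σ+1)/(2*σ))) ^ (2*s) = Ω ^ (2*s-1) := by
      rw [← Real.rpow_mul hΩ0.le]
      congr 1
      rw [hs_def]
      have hσ0 : σ ≠ 0 := by intro h; nlinarith
      field_simp
      ring
    rwa [h2] at h1
  -- the denominator AM-GM
  have hdenom : ∀ x : ℝ, 1 ≤ x → ∀ a : ℝ, 0 ≤ a → a ≤ 4 →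
      x ^ a * Ω ^ (4-a) ≤ x^4 + Ω^4 := by
    intro x hx a ha0 ha4
    have hx0 : (0:ℝ) < x := by linarith
    have h4 : ∀ y : ℝ, 0 < y → y ^ (4:ℝ) = y ^ (4:ℕ) := by
      intro y hy
      rw [show (4:ℝ) = ((4:ℕ):ℝ) by norm_num, Real.rpow_natCast]
    rcases le_total x Ω with h | h
    · calc x ^ a * Ω ^ (4-a) ≤ Ω ^ a * Ω ^ (4-a) :=
            mul_le_mul_of_nonneg_right (rpow_le_rpow hx0.le h ha0) (rpow_nonneg hΩ0.le _)
        _ = Ω ^ (4:ℝ) := by rw [← Real.rpow_add hΩ0]; norm_num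
        _ = Ω ^ (4:ℕ) := h4 Ω hΩ0
        _ ≤ x^4 + Ω^4 := le_add_of_nonneg_left (by positivity)
    · calc x ^ a * Ω ^ (4-a) ≤ x ^ a * x ^ (4-a) :=
            mul_le_mul_of_nonneg_left (rpow_le_rpow hΩ0.le h (by linarith)) (rpow_nonneg hx0.le _)
        _ = x ^ (4:ℝ) := by rw [← Real.rpow_add hx0]; norm_num
        _ = x ^ (4:ℕ) := h4 x hx0
        _ ≤ x^4 + Ω^4 := le_add_of_nonneg_right (by positivity)

  -- floor of Ω
  set N : ℕ := ⌊Ω⌋₊ with hN_def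
  have hN1 : 1 ≤ N := Nat.le_floor (by exact_mod_cast hΩ)
  have hN1' : (1:ℝ) ≤ (N:ℝ) := by exact_mod_cast hN1
  have hNle : (N:ℝ) ≤ Ω := Nat.floor_le hΩ0.le
  have hNgt : Ω < (N:ℝ)+1 := Nat.lt_floor_add_one Ω
  have hN2 : Ω/2 ≤ (N:ℝ) := by
    rcases le_total Ω 2 with h | h
    · linarith
    · linarith
  -- termwise split
  have hterm : ∀ k : ℕ, ((k+1:ℝ)^2 + Z^2) ^ s / ((k+1:ℝ)^2 * ((k+1:ℝ)^4 + Ω^4)) ≤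
      2^s * (((k:ℝ)+1)^(2*s) / (((k:ℝ)+1)^2 * (((k:ℝ)+1)^4 + Ω^4)))
      + (2^s * Z^(2*s)) * (1 / (((k:ℝ)+1)^2 * (((k:ℝ)+1)^4 + Ω^4))) := by
    intro k
    set x : ℝ := (k:ℝ)+1 with hx_def
    have hx1 : (1:ℝ) ≤ x := by
      rw [hx_def]; linarith [(Nat.cast_nonneg k : (0:ℝ) ≤ (k:ℝ))]
    have hx0 : (0:ℝ) < x := by linarith
    have hD0 : (0:ℝ) < x^2 * (x^4 + Ω^4) := by positivity
    have hnum : (x^2 + Z^2) ^ s ≤ 2^s * (x^(2*s) + Z^(2*s)) := by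
      have h1 : (x^2 + Z^2 : ℝ) ≤ 2 * max (x^2) (Z^2) := by
        rcases max_cases (x^2) (Z^2) with ⟨he, h'⟩ | ⟨he, h'⟩ <;> rw [he] <;> nlinarith
      have h2 : ((x:ℝ)^2 + Z^2) ^ s ≤ (2 * max (x^2) (Z^2)) ^ s :=
        rpow_le_rpow (by positivity) h1 hs0.le
      have h3 : ((2:ℝ) * max (x^2) (Z^2)) ^ s = 2^s * (max (x^2) (Z^2))^s :=
        mul_rpow (by norm_num) (le_max_of_le_left (by positivity))
      have h4 : (max (x^2) (Z^2) : ℝ)^s ≤ x^(2*s) + Z^(2*s) := by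
        rcases max_cases (x^2) (Z^2) with ⟨he, h'⟩ | ⟨he, h'⟩ <;> rw [he]
        · rw [hsq x hx0.le]; exact le_add_of_nonneg_right (rpow_nonneg hZ0.le _)
        · rw [hsq Z hZ0.le]; exact le_add_of_nonneg_left (rpow_nonneg hx0.le _)
      calc (x^2+Z^2)^s ≤ (2*max (x^2) (Z^2))^s := h2
        _ = 2^s * (max (x^2) (Z^2))^s := h3
        _ ≤ 2^s * (x^(2*s)+Z^(2*s)) :=
            mul_le_mul_of_nonneg_left h4 (rpow_nonneg (by norm_num) _)
    calc (x^2+Z^2)^s / (x^2*(x^4+Ω^4))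
        ≤ (2^s*(x^(2*s)+Z^(2*s))) / (x^2*(x^4+Ω^4)) := by gcongr
      _ = 2^s * (x^(2*s)/(x^2*(x^4+Ω^4))) + (2^s*Z^(2*s))*(1/(x^2*(x^4+Ω^4))) := by ring
  -- head+tail bound for the x^(2s) part
  have hg0 : ∀ k:ℕ, 0 ≤ ((k:ℝ)+1)^(2*s) / (((k:ℝ)+1)^2*(((k:ℝ)+1)^4+Ω^4)) := by
    intro k
    have : (0:ℝ) < (k:ℝ)+1 := by positivity
    positivity
  have sumG : ∀ M : ℕ, ∑ k ∈ Finset.range M,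
      ((k:ℝ)+1)^(2*s) / (((k:ℝ)+1)^2*(((k:ℝ)+1)^4+Ω^4))
      ≤ (1/ε + 32/(5-2*s)) * Ω^(2*s-5) := by
    intro M
    set K := max M N with hK_def
    have hMK : M ≤ K := le_max_left _ _
    have hNK : N ≤ K := le_max_right _ _
    have step1 : ∑ k ∈ Finset.range M, ((k:ℝ)+1)^(2*s) / (((k:ℝ)+1)^2*(((k:ℝ)+1)^4+Ω^4))
        ≤ ∑ k ∈ Finset.range K, ((k:ℝ)+1)^(2*s) / (((k:ℝ)+1)^2*(((k:ℝ)+1)^4+Ω^4)) :=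
      Finset.sum_le_sum_of_subset_of_nonneg (Finset.range_subset_range.2 hMK) (fun i _ _ => hg0 i)
    have step2 : ∑ k ∈ Finset.range K, ((k:ℝ)+1)^(2*s) / (((k:ℝ)+1)^2*(((k:ℝ)+1)^4+Ω^4))
        = ∑ k ∈ Finset.range N, ((k:ℝ)+1)^(2*s) / (((k:ℝ)+1)^2*(((k:ℝ)+1)^4+Ω^4))
          + ∑ k ∈ Finset.Ico N K, ((k:ℝ)+1)^(2*s) / (((k:ℝ)+1)^2*(((k:ℝ)+1)^4+Ω^4)) := by
      rw [Finset.range_eq_Ico, Finset.range_eq_Ico]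
      exact (Finset.sum_Ico_consecutive _ (Nat.zero_le N) hNK).symm
    have head : ∑ k ∈ Finset.range N, ((k:ℝ)+1)^(2*s) / (((k:ℝ)+1)^2*(((k:ℝ)+1)^4+Ω^4))
        ≤ (1/ε) * Ω^(2*s-5) := by
      have hper : ∀ k:ℕ, ((k:ℝ)+1)^(2*s) / (((k:ℝ)+1)^2*(((k:ℝ)+1)^4+Ω^4))
          ≤ ((k:ℝ)+1)^(ε-1) * Ω^(2*s-5-ε) := by
        intro k
        set x : ℝ := (k:ℝ)+1 with hx_def
        have hx1 : (1:ℝ) ≤ x := by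
          rw [hx_def]; linarith [(Nat.cast_nonneg k : (0:ℝ) ≤ (k:ℝ))]
        have hx0 : (0:ℝ) < x := by linarith
        have hd : x^(2*s-1-ε) * Ω^(4-(2*s-1-ε)) ≤ x^4 + Ω^4 :=
          hdenom x hx1 _ (by linarith) (by linarith)
        have e1 : x^(2:ℕ) * (x^(2*s-1-ε) * Ω^(4-(2*s-1-ε)))
            = x^((2:ℝ)+(2*s-1-ε)) * Ω^(4-(2*s-1-ε)) := by
          rw [show ((2:ℝ)+(2*s-1-ε)) = ((2:ℕ):ℝ)+(2*s-1-ε) by norm_num,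
            Real.rpow_add hx0, Real.rpow_natCast]
          ring
        calc x^(2*s)/(x^2*(x^4+Ω^4))
            ≤ x^(2*s)/(x^2*(x^(2*s-1-ε) * Ω^(4-(2*s-1-ε)))) := by
              apply div_le_div_of_nonneg_left (rpow_nonneg hx0.le _) (by positivity)
              exact mul_le_mul_of_nonneg_left hd (by positivity)
          _ = x^(2*s) / (x^((2:ℝ)+(2*s-1-ε)) * Ω^(4-(2*s-1-ε))) := by rw [← e1]
          _ = x^(ε-1) * Ω^(2*s-5-ε) := by
              rw [div_mul_eq_div_div, ← Real.rpow_sub hx0, div_eq_mul_inv,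
                ← Real.rpow_neg hΩ0.le, show 2*s-((2:ℝ)+(2*s-1-ε)) = ε-1 by ring,
                show -(4-(2*s-1-ε)) = 2*s-5-ε by ring]
      calc ∑ k ∈ Finset.range N, ((k:ℝ)+1)^(2*s) / (((k:ℝ)+1)^2*(((k:ℝ)+1)^4+Ω^4))
          ≤ ∑ k ∈ Finset.range N, ((k:ℝ)+1)^(ε-1) * Ω^(2*s-5-ε) :=
            Finset.sum_le_sum (fun k _ => hper k)
        _ = (∑ k ∈ Finset.range N, ((k:ℝ)+1)^(ε-1)) * Ω^(2*s-5-ε) := by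
            rw [Finset.sum_mul]
        _ ≤ ((N:ℝ)^ε/ε) * Ω^(2*s-5-ε) :=
            mul_le_mul_of_nonneg_right (aux_sum_head hε0 hε1 N) (rpow_nonneg hΩ0.le _)
        _ ≤ (Ω^ε/ε) * Ω^(2*s-5-ε) := by
            have : (N:ℝ)^ε ≤ Ω^ε := rpow_le_rpow (Nat.cast_nonneg N) hNle hε0.le
            apply mul_le_mul_of_nonneg_right _ (rpow_nonneg hΩ0.le _)
            exact div_le_div_of_nonneg_right this hε0.le
        _ = (1/ε) * Ω^(2*s-5) := by
            rw [div_mul_eq_mul_div, ← Real.rpow_add hΩ0, show ε+(2*s-5-ε) = 2*s-5 by ring]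
            ring
    have tail : ∑ k ∈ Finset.Ico N K, ((k:ℝ)+1)^(2*s) / (((k:ℝ)+1)^2*(((k:ℝ)+1)^4+Ω^4))
        ≤ (32/(5-2*s)) * Ω^(2*s-5) := by
      have hper : ∀ k:ℕ, ((k:ℝ)+1)^(2*s) / (((k:ℝ)+1)^2*(((k:ℝ)+1)^4+Ω^4))
          ≤ ((k:ℝ)+1)^(2*s-6) := by
        intro k
        set x : ℝ := (k:ℝ)+1 with hx_def
        have hx1 : (1:ℝ) ≤ x := by
          rw [hx_def]; linarith [(Nat.cast_nonneg k : (0:ℝ) ≤ (k:ℝ))]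
        have hx0 : (0:ℝ) < x := by linarith
        have e1 : (x^2*x^4 : ℝ) = x^((6:ℕ):ℝ) := by
          rw [Real.rpow_natCast]; ring
        calc x^(2*s)/(x^2*(x^4+Ω^4)) ≤ x^(2*s)/(x^2*x^4) := by
              apply div_le_div_of_nonneg_left (rpow_nonneg hx0.le _) (by positivity)
              apply mul_le_mul_of_nonneg_left (le_add_of_nonneg_right (by positivity))
                (by positivity)
          _ = x^(2*s) / x^((6:ℕ):ℝ) := by rw [← e1]
          _ = x^(2*s-6) := by
              rw [← Real.rpow_sub hx0]; norm_num
      have h1 : ∑ k ∈ Finset.Ico N K, ((k:ℝ)+1)^(2*s) / (((k:ℝ)+1)^2*(((k:ℝ)+1)^4+Ω^4))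
          ≤ ∑ k ∈ Finset.Ico N K, ((k:ℝ)+1)^(2*s-6) :=
        Finset.sum_le_sum (fun k _ => hper k)
      have h2 := aux_sum_tail (by linarith : (2*s-6:ℝ) < -1) hN1 K hNK
      have hK0 : 0 ≤ (K:ℝ)^(2*s-6+1) := rpow_nonneg (Nat.cast_nonneg K) _
      have h3 : ((N:ℝ)^(2*s-6+1) - (K:ℝ)^(2*s-6+1)) / (-(2*s-6+1))
          ≤ (N:ℝ)^(2*s-5) / (5-2*s) := by
        rw [show -(2*s-6+1) = 5-2*s by ring, show (2*s-6+1:ℝ) = 2*s-5 by ring]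
        rw [show (2*s-6+1:ℝ) = 2*s-5 by ring] at hK0
        apply div_le_div_of_nonneg_right _ h52.le
        linarith
      have h4 : (N:ℝ)^(2*s-5) ≤ 32 * Ω^(2*s-5) := by
        have hh1 : (N:ℝ)^(2*s-5) ≤ (Ω/2)^(2*s-5) :=
          rpow_le_rpow_of_nonpos (by positivity) hN2 (by linarith)
        have hh2 : (Ω/2)^(2*s-5) = Ω^(2*s-5) * (2:ℝ)^(5-2*s) := by
          rw [Real.div_rpow hΩ0.le (by norm_num), div_eq_mul_inv,
            ← Real.rpow_neg (by norm_num), show -(2*s-5) = 5-2*s by ring]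
        have hh3 : (2:ℝ)^(5-2*s) ≤ 32 := by
          calc (2:ℝ)^(5-2*s) ≤ 2^((5:ℕ):ℝ) :=
                rpow_le_rpow_of_exponent_le (by norm_num) (by push_cast; linarith)
            _ = 32 := by rw [Real.rpow_natCast]; norm_num
        have hΩp : 0 ≤ Ω^(2*s-5) := rpow_nonneg hΩ0.le _
        nlinarith
      calc ∑ k ∈ Finset.Ico N K, ((k:ℝ)+1)^(2*s) / (((k:ℝ)+1)^2*(((k:ℝ)+1)^4+Ω^4))
          ≤ (N:ℝ)^(2*s-5)/(5-2*s) := le_trans h1 (le_trans h2 h3)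
        _ ≤ (32*Ω^(2*s-5))/(5-2*s) := div_le_div_of_nonneg_right h4 h52.le
        _ = (32/(5-2*s)) * Ω^(2*s-5) := by ring
    calc ∑ k ∈ Finset.range M, ((k:ℝ)+1)^(2*s) / (((k:ℝ)+1)^2*(((k:ℝ)+1)^4+Ω^4))
        ≤ _ := step1
      _ = _ := step2
      _ ≤ (1/ε) * Ω^(2*s-5) + (32/(5-2*s)) * Ω^(2*s-5) := add_le_add head tail
      _ = (1/ε + 32/(5-2*s)) * Ω^(2*s-5) := by ring
  -- bound for the Z part
  have sumH : ∀ M:ℕ, ∑ k ∈ Finset.range M, 1/(((k:ℝ)+1)^2*(((k:ℝ)+1)^4+Ω^4))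
      ≤ 2 * ((Ω^4)⁻¹ : ℝ) := by
    intro M
    have hper : ∀ k:ℕ, 1/(((k:ℝ)+1)^2*(((k:ℝ)+1)^4+Ω^4))
        ≤ (1/(((k:ℝ)+1)^2)) * (Ω^4)⁻¹ := by
      intro k
      set x : ℝ := (k:ℝ)+1 with hx_def
      have hx1 : (1:ℝ) ≤ x := by
        rw [hx_def]; linarith [(Nat.cast_nonneg k : (0:ℝ) ≤ (k:ℝ))]
      have hx0 : (0:ℝ) < x := by linarith
      have e : (1/(x^2)) * ((Ω^4)⁻¹:ℝ) = 1/(x^2*Ω^4) := by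
        field_simp
      rw [e]
      apply div_le_div_of_nonneg_left (by norm_num) (by positivity)
      apply mul_le_mul_of_nonneg_left (le_add_of_nonneg_left (by positivity)) (by positivity)
    calc ∑ k ∈ Finset.range M, 1/(((k:ℝ)+1)^2*(((k:ℝ)+1)^4+Ω^4))
        ≤ ∑ k ∈ Finset.range M, (1/(((k:ℝ)+1)^2)) * (Ω^4)⁻¹ :=
          Finset.sum_le_sum (fun k _ => hper k)
      _ = (∑ k ∈ Finset.range M, 1/(((k:ℝ)+1)^2)) * (Ω^4)⁻¹ := by rw [Finset.sum_mul]
      _ ≤ 2 * (Ω^4)⁻¹ := by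
          apply mul_le_mul_of_nonneg_right _ (by positivity)
          refine (aux_sum_sq M).trans ?_
          have : 0 < (M:ℝ)+1 := by positivity
          have := div_nonneg (by norm_num : (0:ℝ) ≤ 2) this.le
          linarith
  -- Ω power algebra
  have hΩ45 : Ω^(2*s-1) * ((Ω^4)⁻¹:ℝ) = Ω^(2*s-5) := by
    rw [← Real.rpow_natCast Ω 4, ← Real.rpow_neg hΩ0.le, ← Real.rpow_add hΩ0]
    congr 1 <;> push_cast <;> ring_nf
  -- the full upper bound on partial sums
  have main_upper : ∀ M:ℕ, ∑ k ∈ Finset.range M,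
      ((k+1:ℝ)^2 + Z^2) ^ s / ((k+1:ℝ)^2 * ((k+1:ℝ)^4 + Ω^4))
      ≤ (6*(1/ε + 32/(5-2*s) + 2)) * Ω^(2*s-5) := by
    intro M
    have hP : (0:ℝ) < 1/ε + 32/(5-2*s) := by positivity
    have hW : (0:ℝ) ≤ Ω^(2*s-5) := rpow_nonneg hΩ0.le _
    have h2s0 : (0:ℝ) ≤ 2^s := rpow_nonneg (by norm_num) _
    have hZs0 : (0:ℝ) ≤ Z^(2*s) := rpow_nonneg hZ0.le _
    calc ∑ k ∈ Finset.range M, ((k+1:ℝ)^2 + Z^2) ^ s / ((k+1:ℝ)^2 * ((k+1:ℝ)^4 + Ω^4))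
        ≤ ∑ k ∈ Finset.range M,
            (2^s * (((k:ℝ)+1)^(2*s) / (((k:ℝ)+1)^2 * (((k:ℝ)+1)^4 + Ω^4)))
            + (2^s * Z^(2*s)) * (1 / (((k:ℝ)+1)^2 * (((k:ℝ)+1)^4 + Ω^4)))) :=
          Finset.sum_le_sum (fun k _ => hterm k)
      _ = 2^s * (∑ k ∈ Finset.range M, ((k:ℝ)+1)^(2*s) / (((k:ℝ)+1)^2*(((k:ℝ)+1)^4+Ω^4)))
          + (2^s * Z^(2*s)) * (∑ k ∈ Finset.range M, 1/(((k:ℝ)+1)^2*(((k:ℝ)+1)^4+Ω^4))) := by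
          rw [Finset.sum_add_distrib, Finset.mul_sum, Finset.mul_sum]
      _ ≤ 2^s * ((1/ε + 32/(5-2*s)) * Ω^(2*s-5)) + (2^s * Z^(2*s)) * (2 * (Ω^4)⁻¹) := by
          apply add_le_add
          · exact mul_le_mul_of_nonneg_left (sumG M) h2s0
          · exact mul_le_mul_of_nonneg_left (sumH M) (by positivity)
      _ ≤ 2^s * ((1/ε + 32/(5-2*s)) * Ω^(2*s-5)) + 2^s * 2 * Ω^(2*s-5) := by
          have h1 : Z^(2*s) * (Ω^4)⁻¹ ≤ Ω^(2*s-1) * (Ω^4)⁻¹ :=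
            mul_le_mul_of_nonneg_right hZpow (by positivity)
          rw [hΩ45] at h1
          nlinarith
      _ ≤ (6*(1/ε + 32/(5-2*s) + 2)) * Ω^(2*s-5) := by
          have e1 : 2^s * ((1/ε + 32/(5-2*s)) * Ω^(2*s-5))
              ≤ 6 * ((1/ε + 32/(5-2*s)) * Ω^(2*s-5)) :=
            mul_le_mul_of_nonneg_right h2s6 (mul_nonneg hP.le hW)
          have e2 : 2^s * 2 * Ω^(2*s-5) ≤ 6 * 2 * Ω^(2*s-5) :=
            mul_le_mul_of_nonneg_right (by linarith) hW
          nlinarith [e1, e2]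
  have upper := Real.tsum_le_of_sum_range_le hF0 main_upper
  have hsum : Summable (fun k : ℕ =>
      ((k+1:ℝ)^2 + Z^2) ^ s / ((k+1:ℝ)^2 * ((k+1:ℝ)^4 + Ω^4))) :=
    summable_of_sum_range_le hF0 main_upper
  -- lower bound
  have key_low : ∀ k ∈ Finset.Ico N (2*N), Ω^(2*s)/(68*Ω^6)
      ≤ ((k+1:ℝ)^2 + Z^2) ^ s / ((k+1:ℝ)^2 * ((k+1:ℝ)^4 + Ω^4)) := by
    intro k hk
    rw [Finset.mem_Ico] at hk
    have hkN : (N:ℝ) ≤ (k:ℝ) := by exact_mod_cast hk.1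
    have hk2N : (k:ℝ)+1 ≤ 2*(N:ℝ) := by exact_mod_cast hk.2
    set x : ℝ := (k:ℝ)+1 with hx_def
    have hx0 : (0:ℝ) < x := by positivity
    have hxΩ : Ω ≤ x := by rw [hx_def]; linarith
    have hx2Ω : x ≤ 2*Ω := by linarith
    have hnum : Ω^(2*s) ≤ (x^2+Z^2)^s := by
      calc Ω^(2*s) = (Ω^2)^s := (hsq Ω hΩ0.le).symm
        _ ≤ (x^2+Z^2)^s := rpow_le_rpow (by positivity) (by nlinarith) hs0.le
    have hden : x^2*(x^4+Ω^4) ≤ 68*Ω^6 := by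
      have h2 : x^2 ≤ (2*Ω)^2 := pow_le_pow_left₀ hx0.le hx2Ω 2
      have h4 : x^4 ≤ (2*Ω)^4 := pow_le_pow_left₀ hx0.le hx2Ω 4
      have hA : x^2 * x^4 ≤ (2*Ω)^2 * (2*Ω)^4 := mul_le_mul h2 h4 (by positivity) (by positivity)
      have hB : x^2 * Ω^4 ≤ (2*Ω)^2 * Ω^4 := mul_le_mul_of_nonneg_right h2 (by positivity)
      nlinarith [hA, hB]
    exact div_le_div₀ (rpow_nonneg (by positivity) _) hnum (by positivity) hden
  have hcard : (Finset.Ico N (2*N)).card = N := by rw [Nat.card_Ico]; omega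
  have hlow2 : (N:ℝ) * (Ω^(2*s)/(68*Ω^6))
      ≤ ∑ k ∈ Finset.Ico N (2*N), ((k+1:ℝ)^2 + Z^2) ^ s / ((k+1:ℝ)^2 * ((k+1:ℝ)^4 + Ω^4)) := by
    have h := Finset.card_nsmul_le_sum (Finset.Ico N (2*N)) _ _ key_low
    rwa [hcard, nsmul_eq_mul] at h
  have hlow3 : ∑ k ∈ Finset.Ico N (2*N),
      ((k+1:ℝ)^2 + Z^2) ^ s / ((k+1:ℝ)^2 * ((k+1:ℝ)^4 + Ω^4))
      ≤ ∑' k : ℕ, ((k+1:ℝ)^2 + Z^2) ^ s / ((k+1:ℝ)^2 * ((k+1:ℝ)^4 + Ω^4)) :=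
    Summable.sum_le_tsum _ (fun i _ => hF0 i) hsum
  have heq : (Ω/2)*(Ω^(2*s)/(68*Ω^6)) = (1/136)*Ω^(2*s-5) := by
    have h5 : Ω^(2*s-5) = Ω^(2*s) * ((Ω^5)⁻¹:ℝ) := by
      rw [← Real.rpow_natCast Ω 5, ← Real.rpow_neg hΩ0.le, ← Real.rpow_add hΩ0]
      congr 1 <;> push_cast <;> ring_nf
    rw [h5]
    field_simp
    ring
  constructor
  · calc (1/136)*Ω^(2*s-5) = (Ω/2)*(Ω^(2*s)/(68*Ω^6)) := heq.symm
      _ ≤ (N:ℝ)*(Ω^(2*s)/(68*Ω^6)) := mul_le_mul_of_nonneg_right hN2 (by positivity)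
      _ ≤ _ := hlow2
      _ ≤ _ := hlow3
  · exact upper
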